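/- Suppose ρ is generated by an F-Luce model with parameters (u*, v*) on a domain containing ∅ and all singleton frames {x}. Define u(x) := ρ(x,∅) and v(x) := ρ(x,{x})·(1 − ρ(x,∅))/(1 − ρ(x,{x})) − ρ(x,∅) for each x ∈ X. Then (u, v) is an F-Luce representation of ρ, and in fact u = u*/u*(X) and v = v*/u*(X). -/

import Mathlib

open Finset

/-- `(u,v)` is an F-Luce representation of `ρ` (on all frames). -/
def IsFLuce {X : Type*} [Fintype X] [DecidableEq X]
    (ρ : X → Finset X → ℝ) (u v : X → ℝ) : Prop :=
  (∀ x, 0 < u x) ∧ (∀ x, 0 ≤ v x) ∧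
    ∀ (F : Finset X) (x : X),
      ρ x F = (u x + if x ∈ F then v x else 0) / ((∑ z, u z) + ∑ z ∈ F, v z)

/-- Identification of F-Luce from the empty frame and singleton frames:
`u(x) := ρ(x,∅)` and `v(x) := ρ(x,{x})·(1−ρ(x,∅))/(1−ρ(x,{x})) − ρ(x,∅)`
give an F-Luce representation of `ρ`, equal to the rescaled true parameters. -/
theorem fLuce_identification_singletons {X : Type*} [Fintype X] [DecidableEq X]
    (hX : 2 ≤ Fintype.card X)
    (ρ : X → Finset X → ℝ) (u' v' : X → ℝ) (hrep : IsFLuce ρ u' v')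
    (hpos : ∀ (x : X) (F : Finset X), 0 < ρ x F)
    (hlt : ∀ x : X, ρ x {x} < 1)
    (u v : X → ℝ)
    (hu : ∀ x, u x = ρ x ∅)
    (hv : ∀ x, v x = ρ x {x} * (1 - ρ x ∅) / (1 - ρ x {x}) - ρ x ∅) :
    IsFLuce ρ u v ∧
      (∀ x, u x = u' x / ∑ z, u' z) ∧ (∀ x, v x = v' x / ∑ z, u' z) := by
  obtain ⟨hu', hv', hρ⟩ := hrep
  have hXne : Nonempty X := Fintype.card_pos_iff.mp (by omega)
  set S := ∑ z, u' z with hSdef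
  have hS : 0 < S := Finset.sum_pos (fun i _ => hu' i) univ_nonempty
  have hSne : S ≠ 0 := ne_of_gt hS
  have hρe : ∀ x, ρ x ∅ = u' x / S := by
    intro x; rw [hρ]; simp
  have hρs : ∀ x, ρ x {x} = (u' x + v' x) / (S + v' x) := by
    intro x; rw [hρ]; simp
  have hBpos : ∀ x, 0 < S + v' x := fun x => by have := hv' x; linarith
  have hlt' : ∀ x, u' x < S := by
    intro x
    have h := hlt x
    rw [hρs x] at h
    have := (div_lt_one (hBpos x)).mp h
    linarith
  have hueq : ∀ x, u x = u' x / S := fun x => by rw [hu, hρe]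
  have hveq : ∀ x, v x = v' x / S := by
    intro x
    rw [hv, hρe, hρs]
    have h3 : S + v' x ≠ 0 := ne_of_gt (hBpos x)
    have h1 : (1 : ℝ) - (u' x + v' x) / (S + v' x) = (S - u' x) / (S + v' x) := by
      field_simp
      ring
    rw [h1]
    have h2 : S - u' x ≠ 0 := by have := hlt' x; intro h; linarith
    field_simp
    ring
  refine ⟨⟨fun x => by rw [hueq]; exact div_pos (hu' x) hS, fun x => by
      rw [hveq]; exact div_nonneg (hv' x) hS.le, ?_⟩, hueq, hveq⟩
  intro F x
  have hsum_u : ∑ z, u z = 1 := by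
    simp only [hueq]
    rw [← Finset.sum_div, ← hSdef, div_self hSne]
  have hsum_v : ∑ z ∈ F, v z = (∑ z ∈ F, v' z) / S := by
    simp only [hveq]; rw [← Finset.sum_div]
  have hFv : 0 ≤ ∑ z ∈ F, v' z := Finset.sum_nonneg fun z _ => hv' z
  have hden : S + ∑ z ∈ F, v' z ≠ 0 := by positivity
  rw [hρ, hueq, hsum_u, hsum_v]
  by_cases hxF : x ∈ F
  · simp only [hxF, if_true, hveq]
    field_simp
  · simp only [hxF, if_false]
    field_simp
    ring
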